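/- Lemma 5.3 (concrete form): Let G(x,y) = (x − x_A)² + y_A² − 2 y_A y, so that {G = 0} is the parabola g with focus A and directrix the line BC. Let α, β ∈ ℝ with α ≠ 0, β ≠ 0, let u be the conic {F = 0} with F = α f₁ f₂ + β h², and assume the discriminant of F is negative (u is an ellipse of the pencil 𝔽, lying inside g). Let P be a point with F(P) = 0 and ∇F(P) ≠ 0, and let E ≠ F' be two points with G(E) = 0, G(F') = 0, ∇F(P)·(E − P) = 0 and ∇F(P)·(F' − P) = 0 (the tangent line to u at P meets g at E and F'). Let W be a point with ∇G(E)·(W − E) = 0 and ∇G(F')·(W − F') = 0 (W is the intersection of the tangent lines to g at E and F'). Let O be the circumcenter of the triangle ABC, i.e. the unique point equidistant from A, B and C (O is the vertex of the pencil, the intersection of the perpendicular bisectors of AB and AC). Then P, O and W are collinear. -/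

import Mathlib

lemma deriv_quad' (a b c0 t : ℝ) : deriv (fun x : ℝ => a*x^2 + b*x + c0) t = 2*a*t + b := by
  have h : HasDerivAt (fun x : ℝ => a*x^2 + b*x + c0) (2*a*t + b) t := by
    have h1 : HasDerivAt (fun x : ℝ => x^2) (2*t) t := by simpa using hasDerivAt_pow 2 t
    have h2 : HasDerivAt (fun x : ℝ => x) 1 t := hasDerivAt_id t
    have h4 := ((h1.const_mul a).add (h2.const_mul b)).add_const c0
    rw [show 2*a*t + b = a * (2 * t) + b * 1 by ring]
    exact h4
  exact h.deriv

lemma deriv_lin' (m k t : ℝ) : deriv (fun y : ℝ => m*y + k) t = m := by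
  have h : HasDerivAt (fun y : ℝ => m*y + k) m t := by
    have h2 : HasDerivAt (fun x : ℝ => x) 1 t := hasDerivAt_id t
    simpa using (h2.const_mul m).add_const k
  exact h.deriv



/-- Affine linear form vanishing exactly on the perpendicular bisector of `AB`
(`B = (0,0)`, `A = (x_A, y_A)`, `c = |AB|`). -/
noncomputable def f1 (xA yA c x y : ℝ) : ℝ := 2*xA*x + 2*yA*y - c^2

/-- Affine linear form vanishing exactly on the perpendicular bisector of `AC`
(`C = (1,0)`). -/
noncomputable def f2 (xA yA c x y : ℝ) : ℝ := 2*(1 - xA)*x - 2*yA*y + c^2 - 1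

/-- Affine linear form vanishing exactly on the line `ZV`. -/
noncomputable def hZV (yA b c x y : ℝ) : ℝ := (b^2 - c^2)*x - 2*yA*y + c^2

/-- The gradient (vector of partial derivatives) of a function `F : ℝ → ℝ → ℝ` at a
point `P` of the plane. -/
noncomputable def gradAt (F : ℝ → ℝ → ℝ) (P : ℝ × ℝ) : ℝ × ℝ :=
  (deriv (fun x => F x P.2) P.1, deriv (fun y => F P.1 y) P.2)

/-- Lemma 5.3 (concrete form): let `u = {F = 0}` be an ellipse of the pencil `𝔽`, `P` a
point of `u`, and let the tangent line to `u` at `P` meet the parabola `g = {G = 0}`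
(focus `A`, directrix `BC`) at the two points `E ≠ F'`. If `W` is the intersection of
the tangent lines to `g` at `E` and `F'`, and `O` is the circumcenter of `ABC` (the
vertex of the pencil), then `P`, `O` and `W` are collinear. -/
theorem statement17 (xA yA : ℝ) (hyA : yA ≠ 0)
    (b c : ℝ) (hb : b = Real.sqrt ((xA - 1)^2 + yA^2))
    (hc : c = Real.sqrt (xA^2 + yA^2)) (hbc : b ≠ c)
    (G : ℝ → ℝ → ℝ) (hG : ∀ x y : ℝ, G x y = (x - xA)^2 + yA^2 - 2*yA*y)
    (α β : ℝ) (hα : α ≠ 0) (hβ : β ≠ 0)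
    (F : ℝ → ℝ → ℝ)
    (hF : ∀ x y : ℝ, F x y = α * (f1 xA yA c x y * f2 xA yA c x y) + β * (hZV yA b c x y)^2)
    (A2 B2 C2 D2 E2 F2c : ℝ)
    (hcoef : ∀ x y : ℝ, F x y = A2*x^2 + B2*(x*y) + C2*y^2 + D2*x + E2*y + F2c)
    (hdisc : B2^2 - 4*A2*C2 < 0)
    (P : ℝ × ℝ) (hP : F P.1 P.2 = 0) (hgradP : gradAt F P ≠ (0, 0))
    (Ept Fpt : ℝ × ℝ) (hEF : Ept ≠ Fpt)
    (hEg : G Ept.1 Ept.2 = 0) (hFg : G Fpt.1 Fpt.2 = 0)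
    (hEtan : (gradAt F P).1 * (Ept.1 - P.1) + (gradAt F P).2 * (Ept.2 - P.2) = 0)
    (hFtan : (gradAt F P).1 * (Fpt.1 - P.1) + (gradAt F P).2 * (Fpt.2 - P.2) = 0)
    (W : ℝ × ℝ)
    (hWE : (gradAt G Ept).1 * (W.1 - Ept.1) + (gradAt G Ept).2 * (W.2 - Ept.2) = 0)
    (hWF : (gradAt G Fpt).1 * (W.1 - Fpt.1) + (gradAt G Fpt).2 * (W.2 - Fpt.2) = 0)
    (O : ℝ × ℝ)
    (hOAB : (O.1 - xA)^2 + (O.2 - yA)^2 = (O.1 - 0)^2 + (O.2 - 0)^2)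
    (hOBC : (O.1 - 0)^2 + (O.2 - 0)^2 = (O.1 - 1)^2 + (O.2 - 0)^2) :
    (O.1 - P.1) * (W.2 - P.2) - (O.2 - P.2) * (W.1 - P.1) = 0 := by
  have hb2 : b^2 = (xA - 1)^2 + yA^2 := by
    rw [hb]; exact Real.sq_sqrt (by positivity)
  have hc2 : c^2 = xA^2 + yA^2 := by
    rw [hc]; exact Real.sq_sqrt (by positivity)
  -- circumcenter coordinates
  have hO1 : O.1 = 1/2 := by linear_combination (1/2)*hOBC
  have hO2 : 2*yA*O.2 = xA^2 + yA^2 - xA := by linear_combination -hOAB - 2*xA*hO1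
  -- gradient of F at P
  set p := P.1 with hp1
  set q := P.2 with hp2
  have hg1 : (gradAt F P).1 =
      2*(α*(4*xA*(1-xA)) + β*(1-2*xA)^2)*p
      + (α*(2*xA*(xA^2+yA^2-1-2*yA*q) + 2*(1-xA)*(2*yA*q-xA^2-yA^2))
         + β*(2*(1-2*xA)*(xA^2+yA^2-2*yA*q))) := by
    have e3 : (fun x => F x P.2) = (fun x =>
        (α*(4*xA*(1-xA)) + β*(1-2*xA)^2)*x^2
        + (α*(2*xA*(xA^2+yA^2-1-2*yA*q) + 2*(1-xA)*(2*yA*q-xA^2-yA^2))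
           + β*(2*(1-2*xA)*(xA^2+yA^2-2*yA*q)))*x
        + (α*((2*yA*q-xA^2-yA^2)*(xA^2+yA^2-1-2*yA*q)) + β*(xA^2+yA^2-2*yA*q)^2)) := by
      funext x
      rw [hF]
      simp only [f1, f2, hZV]
      rw [hb2, hc2]
      ring
    show deriv (fun x => F x P.2) P.1 = _
    rw [e3, deriv_quad']
  have hg2 : (gradAt F P).2 =
      2*(α*(-(4*yA^2)) + β*(4*yA^2))*q
      + (α*(2*yA*(2*(1-xA)*p+xA^2+yA^2-1) - 2*yA*(2*xA*p-xA^2-yA^2))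
         + β*(-(4*yA)*((1-2*xA)*p+xA^2+yA^2))) := by
    have e4 : (fun y => F P.1 y) = (fun y =>
        (α*(-(4*yA^2)) + β*(4*yA^2))*y^2
        + (α*(2*yA*(2*(1-xA)*p+xA^2+yA^2-1) - 2*yA*(2*xA*p-xA^2-yA^2))
           + β*(-(4*yA)*((1-2*xA)*p+xA^2+yA^2)))*y
        + (α*((2*xA*p-xA^2-yA^2)*(2*(1-xA)*p+xA^2+yA^2-1)) + β*((1-2*xA)*p+xA^2+yA^2)^2)) := by
      funext y
      rw [hF]
      simp only [f1, f2, hZV]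
      rw [hb2, hc2]
      ring
    show deriv (fun y => F P.1 y) P.2 = _
    rw [e4, deriv_quad']
  set g1 := (gradAt F P).1 with hgg1
  set g2 := (gradAt F P).2 with hgg2
  -- F(P) = 0 in explicit form
  have hP' : α*((2*xA*p+2*yA*q-(xA^2+yA^2))*(2*(1-xA)*p-2*yA*q+xA^2+yA^2-1))
      + β*((1-2*xA)*p-2*yA*q+xA^2+yA^2)^2 = 0 := by
    rw [hF] at hP
    simp only [f1, f2, hZV] at hP
    rw [hb2, hc2] at hP
    linear_combination hP
  -- parabola equations
  have hEpar : 2*yA*Ept.2 = (Ept.1-xA)^2 + yA^2 := by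
    have := hEg; rw [hG] at this; linarith
  have hFpar : 2*yA*Fpt.2 = (Fpt.1-xA)^2 + yA^2 := by
    have := hFg; rw [hG] at this; linarith
  -- gradient of G at Ept, Fpt
  have gGE1 : (gradAt G Ept).1 = 2*Ept.1 - 2*xA := by
    have e : (fun x => G x Ept.2) = (fun x => 1*x^2 + (-(2*xA))*x + (xA^2+yA^2-2*yA*Ept.2)) := by
      funext x; rw [hG]; ring
    show deriv (fun x => G x Ept.2) Ept.1 = _
    rw [e, deriv_quad']; ring
  have gGE2 : (gradAt G Ept).2 = -(2*yA) := by
    have e : (fun y => G Ept.1 y) = (fun y => (-(2*yA))*y + ((Ept.1-xA)^2+yA^2)) := by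
      funext y; rw [hG]; ring
    show deriv (fun y => G Ept.1 y) Ept.2 = _
    rw [e, deriv_lin']
  have gGF1 : (gradAt G Fpt).1 = 2*Fpt.1 - 2*xA := by
    have e : (fun x => G x Fpt.2) = (fun x => 1*x^2 + (-(2*xA))*x + (xA^2+yA^2-2*yA*Fpt.2)) := by
      funext x; rw [hG]; ring
    show deriv (fun x => G x Fpt.2) Fpt.1 = _
    rw [e, deriv_quad']; ring
  have gGF2 : (gradAt G Fpt).2 = -(2*yA) := by
    have e : (fun y => G Fpt.1 y) = (fun y => (-(2*yA))*y + ((Fpt.1-xA)^2+yA^2)) := by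
      funext y; rw [hG]; ring
    show deriv (fun y => G Fpt.1 y) Fpt.2 = _
    rw [e, deriv_lin']
  rw [gGE1, gGE2] at hWE
  rw [gGF1, gGF2] at hWF
  -- g2 ≠ 0
  have hg2ne : g2 ≠ 0 := by
    intro hz
    have hg1ne : g1 ≠ 0 := by
      intro h0
      exact hgradP (Prod.ext_iff.mpr ⟨h0, hz⟩)
    have hE1 : Ept.1 = p := by
      have : g1 * (Ept.1 - p) = 0 := by linear_combination hEtan - (Ept.2 - q)*hz
      have := (mul_eq_zero.mp this).resolve_left hg1ne
      linarith [sub_eq_zero.mp this]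
    have hF1 : Fpt.1 = p := by
      have : g1 * (Fpt.1 - p) = 0 := by linear_combination hFtan - (Fpt.2 - q)*hz
      have := (mul_eq_zero.mp this).resolve_left hg1ne
      linarith [sub_eq_zero.mp this]
    apply hEF
    have h2 : Ept.2 = Fpt.2 := by
      have h2yA : (2*yA) ≠ 0 := by simp [hyA]
      apply mul_left_cancel₀ h2yA
      rw [hEpar, hFpar, hE1, hF1]
    exact Prod.ext_iff.mpr ⟨by rw [hE1, hF1], h2⟩
  -- E and F have distinct x-coordinates
  have hef : Ept.1 ≠ Fpt.1 := by
    intro h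
    apply hEF
    have h2yA : (2*yA) ≠ 0 := by simp [hyA]
    have h2 : Ept.2 = Fpt.2 := by
      apply mul_left_cancel₀ h2yA
      rw [hEpar, hFpar, h]
    exact Prod.ext_iff.mpr ⟨h, h2⟩
  -- quadratic relations for the chord
  have pe : g2*Ept.1^2 + (2*yA*g1 - 2*xA*g2)*Ept.1
      + (g2*(xA^2+yA^2-2*yA*q) - 2*yA*g1*p) = 0 := by
    linear_combination 2*yA*hEtan - g2*hEpar
  have pf : g2*Fpt.1^2 + (2*yA*g1 - 2*xA*g2)*Fpt.1
      + (g2*(xA^2+yA^2-2*yA*q) - 2*yA*g1*p) = 0 := by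
    linear_combination 2*yA*hFtan - g2*hFpar
  have hdne : Ept.1 - Fpt.1 ≠ 0 := sub_ne_zero.mpr hef
  have hS : g2*(Ept.1 + Fpt.1) = 2*xA*g2 - 2*yA*g1 := by
    have h0 : (Ept.1 - Fpt.1) * (g2*(Ept.1+Fpt.1) - (2*xA*g2 - 2*yA*g1)) = 0 := by
      linear_combination pe - pf
    have := (mul_eq_zero.mp h0).resolve_left hdne
    linarith [sub_eq_zero.mp this]
  have hK : g2*(Ept.1*Fpt.1) = g2*(xA^2+yA^2-2*yA*q) - 2*yA*g1*p := by
    linear_combination Ept.1*hS - pe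
  -- W relations
  have Re : 2*(Ept.1-xA)*(W.1-Ept.1) - 2*yA*W.2 + (Ept.1-xA)^2 + yA^2 = 0 := by
    linear_combination hWE - hEpar
  have Rf : 2*(Fpt.1-xA)*(W.1-Fpt.1) - 2*yA*W.2 + (Fpt.1-xA)^2 + yA^2 = 0 := by
    linear_combination hWF - hFpar
  have hW1 : 2*W.1 = Ept.1 + Fpt.1 := by
    have h0 : (Ept.1 - Fpt.1) * (2*W.1 - (Ept.1 + Fpt.1)) = 0 := by
      linear_combination Re - Rf
    have := (mul_eq_zero.mp h0).resolve_left hdne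
    linarith [sub_eq_zero.mp this]
  have hW2 : 2*yA*W.2 = (Ept.1-xA)*(Fpt.1-xA) + yA^2 := by
    linear_combination (-(1/2))*(Re + Rf) + ((Ept.1+Fpt.1-2*xA)/2)*hW1
  have hW1g : g2*W.1 = xA*g2 - yA*g1 := by
    linear_combination (g2/2)*hW1 + (1/2)*hS
  have hW2g : 2*yA*g2*W.2 = g2*(2*yA^2-2*yA*q) + 2*yA*g1*(xA-p) := by
    linear_combination g2*hW2 + hK - xA*hS
  -- final collinearity
  have key : (4*yA^2*g2) * ((O.1 - p) * (W.2 - q) - (O.2 - q) * (W.1 - p)) = 0 := by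
    linear_combination (4*yA^2*g2*(W.2-q))*hO1 + (-(2*yA)*g2*(W.1-p))*hO2
      + (-(2*yA)*(xA^2+yA^2-xA-2*yA*q))*hW1g + (2*yA*(1/2-p))*hW2g
      + (2*yA*(yA*(1-2*p)*(xA-p) + yA*(xA^2+yA^2-xA-2*yA*q)))*hg1
      + (2*yA*(yA*(1-2*p)*(yA-2*q) - (xA^2+yA^2-xA-2*yA*q)*(xA-p)))*hg2
      + (4*yA^2*(2*p-1))*hP'
  have h4 : (4*yA^2*g2) ≠ 0 := by
    apply mul_ne_zero _ hg2ne
    positivity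
  exact (mul_eq_zero.mp key).resolve_left h4
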